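/- Let N ≥ 1 be an integer and let P, P̃, σ₁², σ₂², |h|², |h̃|², L be positive real numbers with L < |h̃|²·S̃NR, where SNR = P/σ₁² and S̃NR = P̃/σ₂². Let η_{1,1}, …, η_{1,N}, η_{2,1}, …, η_{2,N−1} be mutually independent square-integrable real random variables with mean 0, Var(η_{1,i}) = σ₁²/(2·|h|²) for all i, and Var(η_{2,i}) = σ₂²/(2·|h̃|²) for all i. Define recursively: ε_1 = η_{1,1}/√(P/2); and for 2 ≤ i ≤ N, with α_{i−1} = Var(ε_{i−1}), λ = √(L·P/P̃), γ_{i−1} = √((P̃/(2L) − σ₂²/(2|h̃|²))/α_{i−1}), Y_i = λ·γ_{i−1}·ε_{i−1} + λ·η_{2,i−1} + η_{1,i}, β_i = E[Y_i·ε_{i−1}]/E[Y_i²], and ε_i = ε_{i−1} − β_i·Y_i. Then for every 1 ≤ i ≤ N, Var(ε_i) = (|h|²·SNR)^{−1} · (1 + SNR·|h|²/(Ψ₁·Ψ₂))^{1−i}, where Ψ₁ = 1 + L·|h|²·SNR/(|h̃|²·S̃NR) and Ψ₂ = (1 − L/(|h̃|²·S̃NR))^{−1}. -/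

import Mathlib

open MeasureTheory ProbabilityTheory

lemma aux_iIndepFun_ae_eq {Ω ι : Type*} [MeasurableSpace Ω] {μ : Measure Ω}
    {β : ι → Type*} [m : ∀ i, MeasurableSpace (β i)] {f g : ∀ i, Ω → β i}
    (h : iIndepFun f μ) (hfg : ∀ i, f i =ᵐ[μ] g i) : iIndepFun g μ := by
  rw [iIndepFun_iff_measure_inter_preimage_eq_mul] at h ⊢
  intro S sets H
  have hs : ∀ i : ι, (g i ⁻¹' sets i : Set Ω) =ᵐ[μ] (f i ⁻¹' sets i : Set Ω) := by
    intro i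
    filter_upwards [hfg i] with ω hω
    show (g i ω ∈ sets i) = (f i ω ∈ sets i)
    rw [hω]
  have hae : ∀ᵐ ω ∂μ, ∀ i ∈ (↑S : Set ι), (ω ∈ g i ⁻¹' sets i ↔ ω ∈ f i ⁻¹' sets i) := by
    rw [MeasureTheory.ae_ball_iff S.countable_toSet]
    intro i _
    filter_upwards [hs i] with ω hω
    exact eq_iff_iff.mp hω
  have h1 : μ (⋂ i ∈ S, g i ⁻¹' sets i) = μ (⋂ i ∈ S, f i ⁻¹' sets i) := by
    apply measure_congr
    rw [Filter.eventuallyEq_set]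
    filter_upwards [hae] with ω hω
    simp only [Set.mem_iInter]
    exact ⟨fun hm i hi => (hω i hi).mp (hm i hi), fun hm i hi => (hω i hi).mpr (hm i hi)⟩
  rw [h1, h S H]
  exact Finset.prod_congr rfl fun i hi => (measure_congr (hs i)).symm

lemma aux_integrable_mul {Ω : Type*} [MeasurableSpace Ω] {μ : Measure Ω}
    {f g : Ω → ℝ} (hf : MemLp f 2 μ) (hg : MemLp g 2 μ) :
    Integrable (fun ω => f ω * g ω) μ := by
  have h := (((hf.add hg).integrable_sq.sub hf.integrable_sq).sub hg.integrable_sq).const_mul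
    (2⁻¹ : ℝ)
  refine h.congr (Filter.Eventually.of_forall fun ω => ?_)
  simp only [Pi.add_apply, Pi.sub_apply]
  ring

lemma aux_sq_int {Ω : Type*} [MeasurableSpace Ω] {μ : Measure Ω} [IsProbabilityMeasure μ]
    {X : Ω → ℝ} (hX : MemLp X 2 μ) (hm : ∫ ω, X ω ∂μ = 0) :
    ∫ ω, X ω * X ω ∂μ = variance X μ := by
  rw [variance_eq_sub hX, hm]
  simp only [Pi.pow_apply]
  simp_rw [pow_two]
  ring

lemma aux_cross {Ω : Type*} [MeasurableSpace Ω] {μ : Measure Ω}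
    {X Z : Ω → ℝ} (hX : AEStronglyMeasurable X μ) (hZ : AEStronglyMeasurable Z μ)
    (hind : IndepFun X Z μ) (hmX : ∫ ω, X ω ∂μ = 0) :
    ∫ ω, X ω * Z ω ∂μ = 0 := by
  rw [hind.integral_fun_mul_eq_mul_integral hX hZ, hmX, zero_mul]

lemma aux_alg1 (V M G : ℝ) (hM : M ≠ 0) :
    V - 2 * (G * V / M) * (G * V) + (G * V / M) ^ 2 * M = V - G ^ 2 * V ^ 2 / M := by
  field_simp
  ring

lemma aux_alg2 (q V M D : ℝ) (hM : M ≠ 0) (h : M - q = D) :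
    V - q * V / M = V * (D / M) := by
  field_simp
  linear_combination V * h

lemma aux_alg3 (P Pt s1 s2 hsq htsq L : ℝ) (hL : L ≠ 0) (hPt : Pt ≠ 0) :
    P / 2 + s1 / (2 * hsq) - L * P / Pt * (Pt / (2 * L) - s2 / (2 * htsq))
      = s1 / (2 * hsq) + L * P / Pt * (s2 / (2 * htsq)) := by
  have h1 : L * P / Pt * (Pt / (2 * L)) = P / 2 := by
    field_simp
  linear_combination -h1

/-- Closed-form error variance in the (idealized, no modulo-aliasing)
Schalkwijk–Kailath-type iteration: with `SNR = P/σ₁²`, `S̃NR = P̃/σ₂²`,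
`Ψ₁ = 1 + L|h|²SNR/(|h̃|²S̃NR)`, `Ψ₂ = (1 − L/(|h̃|²S̃NR))⁻¹`, the decoding error at time
`i` satisfies `Var(ε_i) = (|h|²SNR)⁻¹·(1 + SNR|h|²/(Ψ₁Ψ₂))^{1−i}` for `1 ≤ i ≤ N`.
Here `s1 = σ₁²`, `s2 = σ₂²`, `hsq = |h|²`, `htsq = |h̃|²`. -/
theorem stmt_12 (N : ℕ) (hN : 1 ≤ N)
    (P Pt s1 s2 hsq htsq L : ℝ)
    (hP : 0 < P) (hPt : 0 < Pt) (hs1 : 0 < s1) (hs2 : 0 < s2)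
    (hhsq : 0 < hsq) (hhtsq : 0 < htsq) (hL : 0 < L)
    (hLlt : L < htsq * (Pt / s2))
    {Ω : Type*} [MeasurableSpace Ω] (μ : Measure Ω) [IsProbabilityMeasure μ]
    (η1 η2 : ℕ → Ω → ℝ)
    (hindep : iIndepFun
      (Sum.elim (fun i : Fin N => η1 (i.1 + 1)) (fun i : Fin (N - 1) => η2 (i.1 + 1))) μ)
    (hη1L2 : ∀ i, 1 ≤ i → i ≤ N → MemLp (η1 i) 2 μ)
    (hη2L2 : ∀ i, 1 ≤ i → i ≤ N - 1 → MemLp (η2 i) 2 μ)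
    (hη1mean : ∀ i, 1 ≤ i → i ≤ N → ∫ ω, η1 i ω ∂μ = 0)
    (hη2mean : ∀ i, 1 ≤ i → i ≤ N - 1 → ∫ ω, η2 i ω ∂μ = 0)
    (hη1var : ∀ i, 1 ≤ i → i ≤ N → variance (η1 i) μ = s1 / (2 * hsq))
    (hη2var : ∀ i, 1 ≤ i → i ≤ N - 1 → variance (η2 i) μ = s2 / (2 * htsq))
    (ε Y : ℕ → Ω → ℝ) (γ β : ℕ → ℝ)
    (hε1 : ε 1 = fun ω => η1 1 ω / Real.sqrt (P / 2))
    (hγ : ∀ i, 2 ≤ i → i ≤ N →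
      γ (i - 1) =
        Real.sqrt ((Pt / (2 * L) - s2 / (2 * htsq)) / variance (ε (i - 1)) μ))
    (hYdef : ∀ i, 2 ≤ i → i ≤ N →
      Y i = fun ω => Real.sqrt (L * P / Pt) * γ (i - 1) * ε (i - 1) ω
        + Real.sqrt (L * P / Pt) * η2 (i - 1) ω + η1 i ω)
    (hβ : ∀ i, 2 ≤ i → i ≤ N →
      β i = (∫ ω, Y i ω * ε (i - 1) ω ∂μ) / (∫ ω, (Y i ω) ^ 2 ∂μ))
    (hεi : ∀ i, 2 ≤ i → i ≤ N → ε i = fun ω => ε (i - 1) ω - β i * Y i ω) :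
    ∀ i, 1 ≤ i → i ≤ N →
      variance (ε i) μ = (hsq * (P / s1))⁻¹ *
        (1 + (P / s1) * hsq /
          ((1 + L * hsq * (P / s1) / (htsq * (Pt / s2))) *
            (1 - L / (htsq * (Pt / s2)))⁻¹)) ^ ((1 : ℤ) - (i : ℤ)) := by
  classical
  set c : ℝ := 1 + (P / s1) * hsq /
      ((1 + L * hsq * (P / s1) / (htsq * (Pt / s2))) *
        (1 - L / (htsq * (Pt / s2)))⁻¹) with hc_def
  set K : ℝ := (hsq * (P / s1))⁻¹ with hK_def
  -- basic positivity facts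
  have hfrac_lt : L / (htsq * (Pt / s2)) < 1 := (div_lt_one (by positivity)).2 hLlt
  have h1ne : (1 : ℝ) - L / (htsq * (Pt / s2)) ≠ 0 := by
    intro h; rw [sub_eq_zero] at h; exact absurd h.symm (ne_of_lt hfrac_lt)
  have h2ne : (1 : ℝ) + L * hsq * (P / s1) / (htsq * (Pt / s2)) ≠ 0 := by positivity
  have h3ne : s1 / (2 * hsq) + L * P / Pt * (s2 / (2 * htsq)) ≠ 0 := by positivity
  have hc_eq : c = (P / 2 + s1 / (2 * hsq)) /
      (s1 / (2 * hsq) + L * P / Pt * (s2 / (2 * htsq))) := by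
    rw [hc_def]; field_simp; ring
  have hcpos : 0 < c := by rw [hc_eq]; positivity
  have hcne : c ≠ 0 := ne_of_gt hcpos
  have hKpos : 0 < K := by rw [hK_def]; positivity
  have hcinv : c⁻¹ = (s1 / (2 * hsq) + L * P / Pt * (s2 / (2 * htsq))) /
      (P / 2 + s1 / (2 * hsq)) := by rw [hc_eq, inv_div]
  have hq_pos : 0 < Pt / (2 * L) - s2 / (2 * htsq) := by
    rw [sub_pos, div_lt_div_iff₀ (by positivity) (by positivity)]
    have hls : L * s2 < htsq * Pt := by
      have h := mul_lt_mul_of_pos_right hLlt hs2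
      rwa [show htsq * (Pt / s2) * s2 = htsq * Pt by field_simp] at h
    nlinarith
  have hMpos : 0 < P / 2 + s1 / (2 * hsq) := by positivity
  have hMne : P / 2 + s1 / (2 * hsq) ≠ 0 := ne_of_gt hMpos
  have hb2 : Real.sqrt (L * P / Pt) ^ 2 = L * P / Pt := Real.sq_sqrt (by positivity)
  -- measurable modifications of the noises
  have hXL2 : ∀ k : Fin N ⊕ Fin (N - 1),
      MemLp (Sum.elim (fun i : Fin N => η1 (i.1 + 1))
        (fun i : Fin (N - 1) => η2 (i.1 + 1)) k) 2 μ := by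
    rintro (j | j)
    · exact hη1L2 _ le_add_self j.2
    · exact hη2L2 _ le_add_self j.2
  set X' : (Fin N ⊕ Fin (N - 1)) → Ω → ℝ := fun k => ((hXL2 k).1.mk _) with hX'def
  have hX'meas : ∀ k, Measurable (X' k) :=
    fun k => ((hXL2 k).1.stronglyMeasurable_mk).measurable
  have haeX : ∀ k, (Sum.elim (fun i : Fin N => η1 (i.1 + 1))
      (fun i : Fin (N - 1) => η2 (i.1 + 1)) k) =ᵐ[μ] X' k :=
    fun k => (hXL2 k).1.ae_eq_mk
  have hindep' : iIndepFun X' μ :=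
    aux_iIndepFun_ae_eq hindep haeX
  have hae1 : ∀ j : Fin N, η1 (j.1 + 1) =ᵐ[μ] X' (Sum.inl j) := fun j => haeX (Sum.inl j)
  have hae2 : ∀ j : Fin (N - 1), η2 (j.1 + 1) =ᵐ[μ] X' (Sum.inr j) := fun j => haeX (Sum.inr j)
  -- the finsets of indices "used up to time i"
  set S : ℕ → Finset (Fin N ⊕ Fin (N - 1)) := fun i =>
    Finset.univ.filter
      (fun k => Sum.elim (fun j : Fin N => j.1 + 1 ≤ i)
        (fun j : Fin (N - 1) => j.1 + 2 ≤ i) k) with hSdef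
  have hmemS : ∀ (i : ℕ) (k : Fin N ⊕ Fin (N - 1)), k ∈ S i ↔
      Sum.elim (fun j : Fin N => j.1 + 1 ≤ i) (fun j : Fin (N - 1) => j.1 + 2 ≤ i) k := by
    intro i k; simp [hSdef]
  suffices H : ∀ n, 1 ≤ n → n ≤ N →
      MemLp (ε n) 2 μ ∧ (∫ ω, ε n ω ∂μ) = 0 ∧
      (∃ ψ : (({ x // x ∈ S n } : Type _) → ℝ) → ℝ, Measurable ψ ∧
        (ε n =ᵐ[μ] fun ω => ψ (fun k => X' k.1 ω))) ∧
      variance (ε n) μ = K * c ^ ((1 : ℤ) - (n : ℤ)) by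
    intro i h1 h2
    exact (H i h1 h2).2.2.2
  intro n hn
  induction n, hn using Nat.le_induction with
  | base =>
    intro _
    have h1L2 := hη1L2 1 le_rfl hN
    have hsqrtpos : 0 < Real.sqrt (P / 2) := Real.sqrt_pos.2 (by positivity)
    have hfeq : ε 1 = fun ω => (Real.sqrt (P / 2))⁻¹ * η1 1 ω := by
      rw [hε1]; funext ω; rw [div_eq_inv_mul]
    have h0N : (0 : ℕ) < N := hN
    have hk0 : (Sum.inl ⟨0, h0N⟩ : Fin N ⊕ Fin (N - 1)) ∈ S 1 := by
      rw [hmemS]; simp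
    refine ⟨?_, ?_, ?_, ?_⟩
    · rw [hfeq]; exact h1L2.const_mul _
    · rw [hε1]
      rw [integral_div, hη1mean 1 le_rfl hN, zero_div]
    · refine ⟨fun v => v ⟨Sum.inl ⟨0, h0N⟩, hk0⟩ / Real.sqrt (P / 2),
        (measurable_pi_apply _).div_const _, ?_⟩
      filter_upwards [hae1 ⟨0, h0N⟩] with ω hω
      rw [hε1]
      simp only
      rw [hω]
    · rw [hfeq, variance_const_mul, hη1var 1 le_rfl hN]
      have he0 : ((1 : ℤ) - ((1 : ℕ) : ℤ)) = 0 := by simp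
      rw [he0, zpow_zero, mul_one, hK_def]
      have h2 : (Real.sqrt (P / 2)) ^ 2 = P / 2 := Real.sq_sqrt (by positivity)
      rw [inv_pow, h2]
      field_simp
  | succ n hn ih =>
    intro hle
    have hnN : n ≤ N := by omega
    have hnN1 : n ≤ N - 1 := by omega
    obtain ⟨hEl2, hEmean, ⟨ψ, hψm, hψeq⟩, hEvar⟩ := ih hnN
    have hZ1l2 : MemLp (η1 (n + 1)) 2 μ := hη1L2 _ (by omega) hle
    have hZ2l2 : MemLp (η2 n) 2 μ := hη2L2 _ hn hnN1
    have hZ1mean : ∫ ω, η1 (n + 1) ω ∂μ = 0 := hη1mean _ (by omega) hle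
    have hZ2mean : ∫ ω, η2 n ω ∂μ = 0 := hη2mean _ hn hnN1
    have hZ1var := hη1var _ (by omega : 1 ≤ n + 1) hle
    have hZ2var := hη2var _ hn hnN1
    have hnltN : n < N := by omega
    have hn1lt : n - 1 < N - 1 := by omega
    set k1 : Fin N ⊕ Fin (N - 1) := Sum.inl ⟨n, hnltN⟩ with hk1def
    set k2 : Fin N ⊕ Fin (N - 1) := Sum.inr ⟨n - 1, hn1lt⟩ with hk2def
    have haek1 : η1 (n + 1) =ᵐ[μ] X' k1 := hae1 ⟨n, hnltN⟩
    have haek2 : η2 n =ᵐ[μ] X' k2 := by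
      have h := hae2 ⟨n - 1, hn1lt⟩
      rwa [show n - 1 + 1 = n by omega] at h
    -- independence of the three ingredients
    have hk1notS : k1 ∉ S n := by rw [hmemS]; simp [hk1def]
    have hk2notS : k2 ∉ S n := by rw [hmemS]; simp [hk2def]; omega
    have hψeq' : (ψ ∘ fun a (i : { x // x ∈ S n }) => X' i.1 a) =ᵐ[μ] ε n := hψeq.symm
    have hindE1 : IndepFun (ε n) (η1 (n + 1)) μ := by
      have hbase := hindep'.indepFun_finset (S n) {k1}
        (Finset.disjoint_singleton_right.2 hk1notS) hX'meas
      have h := hbase.comp hψm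
        (measurable_pi_apply (⟨k1, Finset.mem_singleton_self k1⟩ : { x // x ∈ ({k1} : Finset (Fin N ⊕ Fin (N - 1))) }))
      have hk1ae : ((fun v : { x // x ∈ ({k1} : Finset (Fin N ⊕ Fin (N - 1))) } → ℝ =>
          v ⟨k1, Finset.mem_singleton_self k1⟩) ∘
          fun a (i : { x // x ∈ ({k1} : Finset (Fin N ⊕ Fin (N - 1))) }) => X' i.1 a)
          =ᵐ[μ] η1 (n + 1) := haek1.symm
      exact h.congr hψeq' hk1ae
    have hindE2 : IndepFun (ε n) (η2 n) μ := by
      have hbase := hindep'.indepFun_finset (S n) {k2}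
        (Finset.disjoint_singleton_right.2 hk2notS) hX'meas
      have h := hbase.comp hψm
        (measurable_pi_apply (⟨k2, Finset.mem_singleton_self k2⟩ : { x // x ∈ ({k2} : Finset (Fin N ⊕ Fin (N - 1))) }))
      have hk2ae : ((fun v : { x // x ∈ ({k2} : Finset (Fin N ⊕ Fin (N - 1))) } → ℝ =>
          v ⟨k2, Finset.mem_singleton_self k2⟩) ∘
          fun a (i : { x // x ∈ ({k2} : Finset (Fin N ⊕ Fin (N - 1))) }) => X' i.1 a)
          =ᵐ[μ] η2 n := haek2.symm
      exact h.congr hψeq' hk2ae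
    have hind12 : IndepFun (η1 (n + 1)) (η2 n) μ :=
      (hindep'.indepFun (by simp [hk1def, hk2def] : k1 ≠ k2)).congr haek1.symm haek2.symm
    -- variance of previous step is positive
    have hVpos : 0 < variance (ε n) μ := by
      rw [hEvar]; exact mul_pos hKpos (zpow_pos hcpos _)
    have hVne : variance (ε n) μ ≠ 0 := ne_of_gt hVpos
    -- γ
    have hγn : γ n = Real.sqrt ((Pt / (2 * L) - s2 / (2 * htsq)) / variance (ε n) μ) := by
      have h := hγ (n + 1) (by omega) hle
      simpa using h
    have hγsq : γ n ^ 2 = (Pt / (2 * L) - s2 / (2 * htsq)) / variance (ε n) μ := by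
      rw [hγn]; exact Real.sq_sqrt (div_nonneg hq_pos.le hVpos.le)
    have hYfun : Y (n + 1) = fun ω =>
        Real.sqrt (L * P / Pt) * γ n * ε n ω + Real.sqrt (L * P / Pt) * η2 n ω
          + η1 (n + 1) ω := by
      have h := hYdef (n + 1) (by omega) hle
      simpa using h
    -- integrability
    have intE : Integrable (ε n) μ := hEl2.integrable one_le_two
    have intZ1 : Integrable (η1 (n + 1)) μ := hZ1l2.integrable one_le_two
    have intZ2 : Integrable (η2 n) μ := hZ2l2.integrable one_le_two
    have intEE : Integrable (fun ω => ε n ω * ε n ω) μ := aux_integrable_mul hEl2 hEl2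
    have intZ2E : Integrable (fun ω => η2 n ω * ε n ω) μ := aux_integrable_mul hZ2l2 hEl2
    have intZ1E : Integrable (fun ω => η1 (n + 1) ω * ε n ω) μ := aux_integrable_mul hZ1l2 hEl2
    have intZ2Z2 : Integrable (fun ω => η2 n ω * η2 n ω) μ := aux_integrable_mul hZ2l2 hZ2l2
    have intZ1Z2 : Integrable (fun ω => η1 (n + 1) ω * η2 n ω) μ :=
      aux_integrable_mul hZ1l2 hZ2l2
    have intZ1Z1 : Integrable (fun ω => η1 (n + 1) ω * η1 (n + 1) ω) μ :=
      aux_integrable_mul hZ1l2 hZ1l2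
    -- basic integrals
    have IEE : ∫ ω, ε n ω * ε n ω ∂μ = variance (ε n) μ := aux_sq_int hEl2 hEmean
    have IZ1Z1 : ∫ ω, η1 (n + 1) ω * η1 (n + 1) ω ∂μ = s1 / (2 * hsq) := by
      rw [aux_sq_int hZ1l2 hZ1mean, hZ1var]
    have IZ2Z2 : ∫ ω, η2 n ω * η2 n ω ∂μ = s2 / (2 * htsq) := by
      rw [aux_sq_int hZ2l2 hZ2mean, hZ2var]
    have IEZ2 : ∫ ω, η2 n ω * ε n ω ∂μ = 0 :=
      aux_cross hZ2l2.1 hEl2.1 hindE2.symm hZ2mean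
    have IEZ1 : ∫ ω, η1 (n + 1) ω * ε n ω ∂μ = 0 :=
      aux_cross hZ1l2.1 hEl2.1 hindE1.symm hZ1mean
    have IZ1Z2 : ∫ ω, η1 (n + 1) ω * η2 n ω ∂μ = 0 :=
      aux_cross hZ1l2.1 hZ2l2.1 hind12 hZ1mean
    -- Y is square integrable with mean zero
    have hYl2 : MemLp (Y (n + 1)) 2 μ := by
      rw [hYfun]
      exact ((hEl2.const_mul _).add (hZ2l2.const_mul _)).add hZ1l2
    have intY : Integrable (Y (n + 1)) μ := hYl2.integrable one_le_two
    have IY0 : ∫ ω, Y (n + 1) ω ∂μ = 0 := by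
      rw [hYfun]
      have i1 : Integrable (fun ω => Real.sqrt (L * P / Pt) * γ n * ε n ω
          + Real.sqrt (L * P / Pt) * η2 n ω) μ := (intE.const_mul _).add (intZ2.const_mul _)
      rw [integral_add i1 intZ1, integral_add (intE.const_mul _) (intZ2.const_mul _),
        integral_const_mul, integral_const_mul, hEmean, hZ2mean, hZ1mean]
      ring
    have IYE : ∫ ω, Y (n + 1) ω * ε n ω ∂μ
        = Real.sqrt (L * P / Pt) * γ n * variance (ε n) μ := by
      rw [hYfun]
      have e : ∀ ω, (Real.sqrt (L * P / Pt) * γ n * ε n ω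
          + Real.sqrt (L * P / Pt) * η2 n ω + η1 (n + 1) ω) * ε n ω
          = Real.sqrt (L * P / Pt) * γ n * (ε n ω * ε n ω)
            + (Real.sqrt (L * P / Pt) * (η2 n ω * ε n ω) + η1 (n + 1) ω * ε n ω) := by
        intro ω; ring
      simp only [e]
      have i1 : Integrable (fun ω => Real.sqrt (L * P / Pt) * γ n * (ε n ω * ε n ω)) μ :=
        intEE.const_mul _
      have i3 : Integrable (fun ω => Real.sqrt (L * P / Pt) * (η2 n ω * ε n ω)) μ :=
        intZ2E.const_mul _
      have i2 : Integrable (fun ω => Real.sqrt (L * P / Pt) * (η2 n ω * ε n ω)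
          + η1 (n + 1) ω * ε n ω) μ := i3.add intZ1E
      rw [integral_add i1 i2, integral_add i3 intZ1E, integral_const_mul, integral_const_mul,
        IEE, IEZ2, IEZ1]
      ring
    have IY2 : ∫ ω, (Y (n + 1) ω) ^ 2 ∂μ = P / 2 + s1 / (2 * hsq) := by
      rw [hYfun]
      have e : ∀ ω, (Real.sqrt (L * P / Pt) * γ n * ε n ω
          + Real.sqrt (L * P / Pt) * η2 n ω + η1 (n + 1) ω) ^ 2
          = (Real.sqrt (L * P / Pt) * γ n) ^ 2 * (ε n ω * ε n ω)
            + ((2 * (Real.sqrt (L * P / Pt) * γ n) * Real.sqrt (L * P / Pt)) * (η2 n ω * ε n ω)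
            + ((2 * (Real.sqrt (L * P / Pt) * γ n)) * (η1 (n + 1) ω * ε n ω)
            + (Real.sqrt (L * P / Pt) ^ 2 * (η2 n ω * η2 n ω)
            + ((2 * Real.sqrt (L * P / Pt)) * (η1 (n + 1) ω * η2 n ω)
            + η1 (n + 1) ω * η1 (n + 1) ω)))) := by
        intro ω; ring
      simp only [e]
      have i5 : Integrable (fun ω => (2 * Real.sqrt (L * P / Pt)) * (η1 (n + 1) ω * η2 n ω)
          + η1 (n + 1) ω * η1 (n + 1) ω) μ := (intZ1Z2.const_mul _).add intZ1Z1
      have i4 : Integrable (fun ω => Real.sqrt (L * P / Pt) ^ 2 * (η2 n ω * η2 n ω)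
          + ((2 * Real.sqrt (L * P / Pt)) * (η1 (n + 1) ω * η2 n ω)
            + η1 (n + 1) ω * η1 (n + 1) ω)) μ := (intZ2Z2.const_mul _).add i5
      have i3 : Integrable (fun ω => (2 * (Real.sqrt (L * P / Pt) * γ n))
            * (η1 (n + 1) ω * ε n ω)
          + (Real.sqrt (L * P / Pt) ^ 2 * (η2 n ω * η2 n ω)
            + ((2 * Real.sqrt (L * P / Pt)) * (η1 (n + 1) ω * η2 n ω)
            + η1 (n + 1) ω * η1 (n + 1) ω))) μ := (intZ1E.const_mul _).add i4
      have i2 : Integrable (fun ω =>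
          (2 * (Real.sqrt (L * P / Pt) * γ n) * Real.sqrt (L * P / Pt)) * (η2 n ω * ε n ω)
          + ((2 * (Real.sqrt (L * P / Pt) * γ n)) * (η1 (n + 1) ω * ε n ω)
          + (Real.sqrt (L * P / Pt) ^ 2 * (η2 n ω * η2 n ω)
          + ((2 * Real.sqrt (L * P / Pt)) * (η1 (n + 1) ω * η2 n ω)
          + η1 (n + 1) ω * η1 (n + 1) ω)))) μ := (intZ2E.const_mul _).add i3
      have i1 : Integrable (fun ω =>
          (Real.sqrt (L * P / Pt) * γ n) ^ 2 * (ε n ω * ε n ω)) μ := intEE.const_mul _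
      rw [integral_add i1 i2, integral_add (intZ2E.const_mul _) i3,
        integral_add (intZ1E.const_mul _) i4, integral_add (intZ2Z2.const_mul _) i5,
        integral_add (intZ1Z2.const_mul _) intZ1Z1,
        integral_const_mul, integral_const_mul, integral_const_mul, integral_const_mul,
        integral_const_mul, IEE, IEZ2, IEZ1, IZ2Z2, IZ1Z2, IZ1Z1]
      rw [mul_pow, hb2, hγsq]
      field_simp
      ring
    -- value of β
    have hβval : β (n + 1) = Real.sqrt (L * P / Pt) * γ n * variance (ε n) μ
        / (P / 2 + s1 / (2 * hsq)) := by
      have h := hβ (n + 1) (by omega) hle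
      simp only [Nat.add_sub_cancel] at h
      rw [h, IYE, IY2]
    -- the recursion for ε
    have hεup : ε (n + 1) = fun ω => ε n ω - β (n + 1) * Y (n + 1) ω := by
      have h := hεi (n + 1) (by omega) hle
      simpa using h
    have hεl2 : MemLp (ε (n + 1)) 2 μ := by
      rw [hεup]; exact hEl2.sub (hYl2.const_mul _)
    have hεmean : ∫ ω, ε (n + 1) ω ∂μ = 0 := by
      rw [hεup]
      rw [integral_sub intE (intY.const_mul _), integral_const_mul, hEmean, IY0]
      ring
    have intYE : Integrable (fun ω => Y (n + 1) ω * ε n ω) μ := aux_integrable_mul hYl2 hEl2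
    have intY2 : Integrable (fun ω => (Y (n + 1) ω) ^ 2) μ := hYl2.integrable_sq
    have hvar : variance (ε (n + 1)) μ
        = variance (ε n) μ
          - 2 * β (n + 1) * (Real.sqrt (L * P / Pt) * γ n * variance (ε n) μ)
          + β (n + 1) ^ 2 * (P / 2 + s1 / (2 * hsq)) := by
      rw [variance_eq_sub hεl2, hεmean]
      rw [hεup]
      simp only [Pi.pow_apply]
      have e : ∀ ω, (ε n ω - β (n + 1) * Y (n + 1) ω) ^ 2
          = ε n ω * ε n ω - (2 * β (n + 1)) * (Y (n + 1) ω * ε n ω)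
            + β (n + 1) ^ 2 * (Y (n + 1) ω) ^ 2 := fun ω => by ring
      simp only [e]
      have i1 : Integrable (fun ω => ε n ω * ε n ω
          - (2 * β (n + 1)) * (Y (n + 1) ω * ε n ω)) μ := intEE.sub (intYE.const_mul _)
      rw [integral_add i1 (intY2.const_mul _), integral_sub intEE (intYE.const_mul _),
        integral_const_mul, integral_const_mul, IEE, IYE, IY2]
      ring
    -- the key variance recursion
    have hγV : γ n ^ 2 * variance (ε n) μ = Pt / (2 * L) - s2 / (2 * htsq) := by
      rw [hγsq]; field_simp
    have key : variance (ε (n + 1)) μ = variance (ε n) μ * c⁻¹ := by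
      rw [hvar, hβval,
        aux_alg1 (variance (ε n) μ) (P / 2 + s1 / (2 * hsq)) (Real.sqrt (L * P / Pt) * γ n) hMne,
        mul_pow, hb2]
      have e2 : L * P / Pt * γ n ^ 2 * variance (ε n) μ ^ 2
          = L * P / Pt * (Pt / (2 * L) - s2 / (2 * htsq)) * variance (ε n) μ := by
        linear_combination (L * P / Pt) * variance (ε n) μ * hγV
      rw [e2, hcinv]
      exact aux_alg2 _ _ _ _ hMne (aux_alg3 P Pt s1 s2 hsq htsq L (ne_of_gt hL) (ne_of_gt hPt))
    refine ⟨hεl2, hεmean, ?_, ?_⟩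
    · have hsub : S n ⊆ S (n + 1) := by
        intro k hk
        rw [hmemS] at hk ⊢
        rcases k with j | j
        · simp only [Sum.elim_inl] at hk ⊢; omega
        · simp only [Sum.elim_inr] at hk ⊢; omega
      have hk1mem : k1 ∈ S (n + 1) := by rw [hmemS]; simp [hk1def]
      have hk2mem : k2 ∈ S (n + 1) := by rw [hmemS]; simp [hk2def]; omega
      refine ⟨fun v => (ψ fun k => v ⟨k.1, hsub k.2⟩)
          - β (n + 1) * (Real.sqrt (L * P / Pt) * γ n * (ψ fun k => v ⟨k.1, hsub k.2⟩)
            + Real.sqrt (L * P / Pt) * v ⟨k2, hk2mem⟩ + v ⟨k1, hk1mem⟩), ?_, ?_⟩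
      · have hrestr : Measurable fun (v : { x // x ∈ S (n + 1) } → ℝ)
            (k : { x // x ∈ S n }) => v ⟨k.1, hsub k.2⟩ :=
          measurable_pi_lambda _ fun k => measurable_pi_apply _
        have h1 : Measurable fun v : { x // x ∈ S (n + 1) } → ℝ =>
            ψ fun k => v ⟨k.1, hsub k.2⟩ := hψm.comp hrestr
        exact h1.sub ((((h1.const_mul _).add
          ((measurable_pi_apply _).const_mul _)).add (measurable_pi_apply _)).const_mul _)
      · filter_upwards [hψeq, haek1, haek2] with ω hωE hω1 hω2
        simp only [hεup, hYfun]
        rw [hωE, hω1, hω2]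
    · rw [key, hEvar, mul_assoc, ← zpow_sub_one₀ hcne]
      have : ((1 : ℤ) - (n : ℤ)) - 1 = 1 - ((n + 1 : ℕ) : ℤ) := by push_cast; ring
      rw [this]
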